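/- Every unitary n×n matrix V can be decomposed as V = O₁ Φ O₂, where O₁ and O₂ are real orthogonal matrices and Φ is a diagonal matrix whose diagonal entries are complex numbers of modulus 1. -/

import Mathlib

open Matrix Module.End

variable {n : ℕ}

/-- Multiplying on both sides by an orthonormal-basis change-of-basis matrix diagonalizes
a matrix whose `mulVec` acts diagonally on the basis. -/
lemma diag_of_eigen (M : Matrix (Fin n) (Fin n) ℝ)
    (b : OrthonormalBasis (Fin n) ℝ (EuclideanSpace ℝ (Fin n))) (d : Fin n → ℝ)
    (h : ∀ j, M *ᵥ ⇑(b j) = d j • ⇑(b j)) :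
    star ((EuclideanSpace.basisFun (Fin n) ℝ).toBasis.toMatrix b.toBasis) * M *
      ((EuclideanSpace.basisFun (Fin n) ℝ).toBasis.toMatrix b.toBasis) = diagonal d := by
  set U : Matrix (Fin n) (Fin n) ℝ :=
    (EuclideanSpace.basisFun (Fin n) ℝ).toBasis.toMatrix b.toBasis with hU
  have hUmem : U ∈ Matrix.unitaryGroup (Fin n) ℝ :=
    (EuclideanSpace.basisFun (Fin n) ℝ).toMatrix_orthonormalBasis_mem_unitary b
  have hUapply : ∀ i j, U i j = b j i := fun i j => rfl
  have hUmul : ∀ j, U *ᵥ Pi.single j 1 = ⇑(b j) := by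
    intro j
    funext i
    simp [mulVec_single, hUapply]
  have hstarU : ∀ j, (star U) *ᵥ ⇑(b j) = Pi.single j 1 := by
    intro j
    rw [← hUmul, mulVec_mulVec, Unitary.coe_star_mul_self ⟨U, hUmem⟩, one_mulVec]
  apply Matrix.toEuclideanLin.injective
  apply Module.Basis.ext (EuclideanSpace.basisFun (Fin n) ℝ).toBasis
  intro i
  simp only [toEuclideanLin_apply, OrthonormalBasis.coe_toBasis, EuclideanSpace.basisFun_apply,
    PiLp.ofLp_single, ← mulVec_mulVec, hUmul, h, Matrix.diagonal_mulVec_single, mulVec_smul,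
    hstarU, WithLp.toLp_smul, PiLp.toLp_single, mul_one]
  apply PiLp.ext
  intro j
  simp only [PiLp.smul_apply, EuclideanSpace.single_apply, smul_eq_mul, mul_ite, mul_one, mul_zero]

lemma exists_joint_diag (X Y : Matrix (Fin n) (Fin n) ℝ)
    (hX : X.IsHermitian) (hY : Y.IsHermitian) (hC : X * Y = Y * X) :
    ∃ (O : Matrix (Fin n) (Fin n) ℝ) (c s : Fin n → ℝ),
      O ∈ Matrix.orthogonalGroup (Fin n) ℝ ∧
      star O * X * O = Matrix.diagonal c ∧ star O * Y * O = Matrix.diagonal s := by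
  classical
  set A := Matrix.toEuclideanLin X with hA
  set B := Matrix.toEuclideanLin Y with hB
  have hAs : A.IsSymmetric := Matrix.isHermitian_iff_isSymmetric.mp hX
  have hBs : B.IsSymmetric := Matrix.isHermitian_iff_isSymmetric.mp hY
  have hmul : ∀ (M N : Matrix (Fin n) (Fin n) ℝ),
      Matrix.toEuclideanLin (M * N) =
        Matrix.toEuclideanLin M ∘ₗ Matrix.toEuclideanLin N := by
    intro M N
    ext v
    simp [Matrix.toEuclideanLin_apply, Matrix.mulVec_mulVec]
  have hABcomm : Commute A B := by
    show A * B = B * A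
    have h1 : A * B = Matrix.toEuclideanLin (X * Y) := by
      rw [hmul]; rfl
    have h2 : B * A = Matrix.toEuclideanLin (Y * X) := by
      rw [hmul]; rfl
    rw [h1, h2, hC]
  set W : ℝ × ℝ → Submodule ℝ (EuclideanSpace ℝ (Fin n)) :=
      fun i => eigenspace A i.2 ⊓ eigenspace B i.1 with hW
  have internal : DirectSum.IsInternal W :=
    LinearMap.IsSymmetric.directSum_isInternal_of_commute hAs hBs hABcomm
  have htop : ⨆ p, W p = ⊤ := by
    rw [iSup_prod]
    rw [iSup_comm]
    exact LinearMap.IsSymmetric.iSup_iSup_eigenspace_inf_eigenspace_eq_top_of_commute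
      hAs hBs hABcomm
  have indep : iSupIndep W := internal.submodule_iSupIndep
  haveI hFin : Fintype { p : ℝ × ℝ // W p ≠ ⊥ } := indep.fintypeNeBotOfFiniteDimensional
  have indep' : iSupIndep (fun p : { p : ℝ × ℝ // W p ≠ ⊥ } => W p) :=
    indep.comp Subtype.coe_injective
  have htop' : ⨆ p : { p : ℝ × ℝ // W p ≠ ⊥ }, W p = ⊤ := by
    rw [iSup_ne_bot_subtype, htop]
  have internal' : DirectSum.IsInternal (fun p : { p : ℝ × ℝ // W p ≠ ⊥ } => W p) :=
    (DirectSum.isInternal_submodule_iff_iSupIndep_and_iSup_eq_top _).mpr ⟨indep', htop'⟩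
  have hn : Module.finrank ℝ (EuclideanSpace ℝ (Fin n)) = n := finrank_euclideanSpace_fin
  have fam0 := LinearMap.IsSymmetric.orthogonalFamily_eigenspace_inf_eigenspace hAs hBs
  have fam : OrthogonalFamily ℝ (fun p : { p : ℝ × ℝ // W p ≠ ⊥ } => W p)
      (fun p => (W p).subtypeₗᵢ) := fam0.comp Subtype.coe_injective
  set b := internal'.subordinateOrthonormalBasis hn fam with hb
  set μ : Fin n → ℝ × ℝ :=
    fun j => (internal'.subordinateOrthonormalBasisIndex hn j fam : { p : ℝ × ℝ // W p ≠ ⊥ }) with hμ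
  have hsub : ∀ j, b j ∈ W (μ j) :=
    fun j => internal'.subordinateOrthonormalBasis_subordinate hn j fam
  have hXb : ∀ j, X *ᵥ ⇑(b j) = (μ j).2 • ⇑(b j) := by
    intro j
    have := (mem_eigenspace_iff.mp (hsub j).1)
    have h2 := congrArg (WithLp.equiv 2 (Fin n → ℝ)) this
    simpa [hA, hB, Matrix.toEuclideanLin_apply] using h2
  have hYb : ∀ j, Y *ᵥ ⇑(b j) = (μ j).1 • ⇑(b j) := by
    intro j
    have := (mem_eigenspace_iff.mp (hsub j).2)
    have h2 := congrArg (WithLp.equiv 2 (Fin n → ℝ)) this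
    simpa [hA, hB, Matrix.toEuclideanLin_apply] using h2
  refine ⟨(EuclideanSpace.basisFun (Fin n) ℝ).toBasis.toMatrix b.toBasis,
    fun j => (μ j).2, fun j => (μ j).1,
    (EuclideanSpace.basisFun (Fin n) ℝ).toMatrix_orthonormalBasis_mem_unitary b,
    diag_of_eigen X b _ hXb, diag_of_eigen Y b _ hYb⟩

lemma mapC_mul (M N : Matrix (Fin n) (Fin n) ℝ) :
    (M * N).map (fun a => (a : ℂ)) =
      M.map (fun a => (a : ℂ)) * N.map (fun a => (a : ℂ)) := by
  ext i j
  simp [Matrix.mul_apply, Matrix.map_apply]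

lemma mapC_one : (1 : Matrix (Fin n) (Fin n) ℝ).map (fun a => (a : ℂ)) = 1 := by
  ext i j
  simp [Matrix.map_apply, Matrix.one_apply, apply_ite]

lemma mapC_inj {M N : Matrix (Fin n) (Fin n) ℝ}
    (h : M.map (fun a => (a : ℂ)) = N.map (fun a => (a : ℂ))) : M = N := by
  ext i j
  have := congrFun (congrFun h i) j
  simpa [Matrix.map_apply] using this

theorem unitary_decomposition' {n : ℕ} (V : Matrix (Fin n) (Fin n) ℂ)
    (hV : V ∈ Matrix.unitaryGroup (Fin n) ℂ) :
    ∃ (O₁ O₂ : Matrix (Fin n) (Fin n) ℝ) (φ : Fin n → ℝ),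
      O₁ ∈ Matrix.orthogonalGroup (Fin n) ℝ ∧
      O₂ ∈ Matrix.orthogonalGroup (Fin n) ℝ ∧
      V = O₁.map (fun a => (a : ℂ)) *
          Matrix.diagonal (fun j => Complex.exp (Complex.I * φ j)) *
          O₂.map (fun a => (a : ℂ)) := by
  classical
  have hV1 : star V * V = 1 := hV.1
  have hV2 : V * star V = 1 := hV.2
  set S := V * Vᵀ with hS
  have hSsym : Sᵀ = S := by
    rw [hS, Matrix.transpose_mul, Matrix.transpose_transpose]
  have hmapstar : V.map star = (star V)ᵀ := by
    ext i j
    simp [Matrix.map_apply, Matrix.transpose_apply, Matrix.conjTranspose_apply]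
  have hVTstar : Vᵀ * V.map star = 1 := by
    have h := congrArg Matrix.transpose hV1
    rw [Matrix.transpose_mul, Matrix.transpose_one] at h
    rw [hmapstar]
    exact h
  have hSunit : S * star S = 1 := by
    have hstS : star S = V.map star * star V := by
      rw [hS, StarMul.star_mul]
      congr 1
    rw [hstS, hS, mul_assoc, ← mul_assoc Vᵀ, hVTstar, one_mul, hV2]
  set X := S.map Complex.re with hX
  set Y := S.map Complex.im with hYdef
  have hSdec : S = X.map (fun a => (a : ℂ)) + Complex.I • Y.map (fun a => (a : ℂ)) := by
    ext i j
    simp only [Matrix.add_apply, Matrix.map_apply, Matrix.smul_apply, smul_eq_mul]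
    rw [mul_comm]
    exact (Complex.re_add_im _).symm
  have hstarSdec : star S = X.map (fun a => (a : ℂ)) - Complex.I • Y.map (fun a => (a : ℂ)) := by
    ext i j
    have hsym_entry : S j i = S i j := by
      have := congrFun (congrFun hSsym i) j
      simpa [Matrix.transpose_apply] using this
    rw [Matrix.star_apply, Matrix.sub_apply, Matrix.smul_apply, Matrix.map_apply,
      Matrix.map_apply, hsym_entry]
    simp [Complex.ext_iff, Complex.star_def]
    exact ⟨rfl, rfl⟩
  -- key algebraic identity
  have hexp : (X * X + Y * Y).map (fun a => (a : ℂ)) +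
      Complex.I • (Y * X - X * Y).map (fun a => (a : ℂ)) = 1 := by
    have h : (X.map (fun a => (a : ℂ)) + Complex.I • Y.map (fun a => (a : ℂ))) *
        (X.map (fun a => (a : ℂ)) - Complex.I • Y.map (fun a => (a : ℂ))) = 1 := by
      rw [← hSdec, ← hstarSdec]; exact hSunit
    rw [Matrix.map_add, mapC_mul, mapC_mul, Matrix.map_sub, mapC_mul, mapC_mul]
    rw [mul_sub, add_mul, add_mul] at h
    rw [smul_mul_assoc, mul_smul_comm, smul_mul_assoc, mul_smul_comm, smul_smul,
      Complex.I_mul_I, neg_one_smul] at h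
    rw [← h]
    · module
    all_goals intro a b; push_cast; ring
  have hentry : ∀ i j, ((X * X + Y * Y) i j : ℂ) + Complex.I * ((Y * X - X * Y) i j : ℂ)
      = if i = j then 1 else 0 := by
    intro i j
    have h := congrFun (congrFun hexp i) j
    simpa [Matrix.add_apply, Matrix.map_apply, Matrix.smul_apply, smul_eq_mul,
      Matrix.one_apply] using h
  have hcomm : X * Y = Y * X := by
    have h0 : ∀ i j, (Y * X - X * Y) i j = 0 := by
      intro i j
      have him := congrArg Complex.im (hentry i j)
      simpa [Complex.add_im, Complex.mul_im, apply_ite Complex.im] using him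
    ext i j
    have := h0 i j
    simp only [Matrix.sub_apply] at this
    linarith
  have hP : X * X + Y * Y = 1 := by
    ext i j
    have hre := congrArg Complex.re (hentry i j)
    simpa [Complex.add_re, Complex.mul_re, apply_ite Complex.re, apply_ite Complex.im,
      Matrix.one_apply] using hre
  -- Hermitian (symmetric) real matrices
  have hsym_entry : ∀ i j, S j i = S i j := by
    intro i j
    have := congrFun (congrFun hSsym i) j
    simpa [Matrix.transpose_apply] using this
  have hXher : X.IsHermitian := by
    ext i j
    show star (X j i) = X i j
    rw [star_trivial, hX]
    simp only [Matrix.map_apply]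
    rw [hsym_entry]
  have hYher : Y.IsHermitian := by
    ext i j
    show star (Y j i) = Y i j
    rw [star_trivial, hYdef]
    simp only [Matrix.map_apply]
    rw [hsym_entry]
  obtain ⟨O, c, s, hO, hXd, hYd⟩ := exists_joint_diag X Y hXher hYher hcomm
  have hOst : star O = Oᵀ := by
    ext i j
    simp [Matrix.star_apply, Matrix.conjTranspose_apply, Matrix.transpose_apply]
  have hO1 : O * Oᵀ = 1 := by
    have := (Matrix.mem_orthogonalGroup_iff (Fin n) ℝ).mp hO
    exact this
  have hO2 : Oᵀ * O = 1 := by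
    have := (Matrix.mem_orthogonalGroup_iff' (Fin n) ℝ).mp hO
    exact this
  rw [hOst] at hXd hYd
  -- recover X and Y
  have hXrec : X = O * Matrix.diagonal c * Oᵀ := by
    rw [← hXd]
    have h : O * (Oᵀ * X * O) * Oᵀ = (O * Oᵀ) * X * (O * Oᵀ) := by noncomm_ring
    rw [h, hO1, one_mul, mul_one]
  have hYrec : Y = O * Matrix.diagonal s * Oᵀ := by
    rw [← hYd]
    have h : O * (Oᵀ * Y * O) * Oᵀ = (O * Oᵀ) * Y * (O * Oᵀ) := by noncomm_ring
    rw [h, hO1, one_mul, mul_one]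
  -- c j ^ 2 + s j ^ 2 = 1
  have hcs : ∀ j, c j * c j + s j * s j = 1 := by
    intro j
    have hdd : Matrix.diagonal c * Matrix.diagonal c + Matrix.diagonal s * Matrix.diagonal s
        = (1 : Matrix (Fin n) (Fin n) ℝ) := by
      calc Matrix.diagonal c * Matrix.diagonal c + Matrix.diagonal s * Matrix.diagonal s
          = Oᵀ * X * O * (Oᵀ * X * O) + Oᵀ * Y * O * (Oᵀ * Y * O) := by rw [hXd, hYd]
        _ = Oᵀ * (X * (O * Oᵀ) * X) * O + Oᵀ * (Y * (O * Oᵀ) * Y) * O := by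
            noncomm_ring
        _ = Oᵀ * (X * X + Y * Y) * O := by rw [hO1]; noncomm_ring
        _ = Oᵀ * O := by rw [hP]; rw [mul_one]
        _ = 1 := hO2
    have := congrFun (congrFun hdd j) j
    simpa [Matrix.add_apply, Matrix.diagonal_mul_diagonal, Matrix.diagonal_apply,
      Matrix.one_apply] using this
  -- the unit-modulus diagonal entries
  set z : Fin n → ℂ := fun j => (c j : ℂ) + (s j : ℂ) * Complex.I with hz
  have habs : ∀ j, ‖z j‖ = 1 := by
    intro j
    rw [hz]
    simp only [Complex.norm_def, Complex.normSq_apply]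
    simp only [Complex.add_re, Complex.ofReal_re, Complex.mul_re, Complex.I_re, Complex.I_im,
      Complex.ofReal_im, Complex.add_im, Complex.mul_im]
    ring_nf
    rw [show (c j)^2 + (s j)^2 = 1 by have := hcs j; nlinarith]
    exact Real.sqrt_one
  set φ : Fin n → ℝ := fun j => (z j).arg / 2 with hφ
  have hz_exp : ∀ j, Complex.exp (Complex.I * (φ j : ℂ)) * Complex.exp (Complex.I * (φ j : ℂ))
      = z j := by
    intro j
    rw [← Complex.exp_add]
    have harg : Complex.exp ((z j).arg * Complex.I) = z j := by
      have := Complex.norm_mul_exp_arg_mul_I (z j)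
      rwa [habs j, Complex.ofReal_one, one_mul] at this
    rw [← harg]
    congr 1
    rw [hφ]
    push_cast
    ring
  set Φ : Matrix (Fin n) (Fin n) ℂ :=
    Matrix.diagonal (fun j => Complex.exp (Complex.I * (φ j : ℂ))) with hΦ
  set Ψ : Matrix (Fin n) (Fin n) ℂ :=
    Matrix.diagonal (fun j => Complex.exp (-(Complex.I * (φ j : ℂ)))) with hΨ
  have hΦΨ : Φ * Ψ = 1 := by
    rw [hΦ, hΨ, Matrix.diagonal_mul_diagonal]
    convert Matrix.diagonal_one
    rw [← Complex.exp_add]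
    simp
  have hΨΦ : Ψ * Φ = 1 := by
    rw [hΦ, hΨ, Matrix.diagonal_mul_diagonal]
    convert Matrix.diagonal_one
    rw [← Complex.exp_add]
    simp
  have hΨzΨ : Ψ * Matrix.diagonal z * Ψ = 1 := by
    rw [hΨ, Matrix.diagonal_mul_diagonal, Matrix.diagonal_mul_diagonal]
    convert Matrix.diagonal_one
    rename_i j
    rw [← hz_exp j, ← Complex.exp_add, ← Complex.exp_add, ← Complex.exp_add]
    simp
  set Oc : Matrix (Fin n) (Fin n) ℂ := O.map (fun a => (a : ℂ)) with hOc
  have hOcT : Ocᵀ = Oᵀ.map (fun a => (a : ℂ)) := by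
    ext i j
    simp [hOc, Matrix.transpose_apply, Matrix.map_apply]
  have hOc1 : Oc * Ocᵀ = 1 := by
    rw [hOc, hOcT, ← mapC_mul, hO1, mapC_one]
  have hOc2 : Ocᵀ * Oc = 1 := by
    rw [hOc, hOcT, ← mapC_mul, hO2, mapC_one]
  -- decomposition of S over ℂ
  have hdiagz : (Matrix.diagonal c).map (fun a => (a : ℂ)) +
      Complex.I • (Matrix.diagonal s).map (fun a => (a : ℂ)) = Matrix.diagonal z := by
    ext i j
    rcases eq_or_ne i j with rfl | hij
    · simp [Matrix.diagonal_apply_eq, Matrix.map_apply, hz]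
      ring
    · simp [Matrix.diagonal_apply_ne _ hij, Matrix.map_apply, hij]
  have hSrec : S = Oc * Matrix.diagonal z * Ocᵀ := by
    rw [hSdec, hXrec, hYrec]
    rw [mapC_mul, mapC_mul, mapC_mul, mapC_mul, ← hOcT, ← hOc]
    rw [← hdiagz]
    rw [mul_add, add_mul]
    congr 1
    rw [Matrix.mul_smul, Matrix.smul_mul]
  -- define W and show it is real orthogonal
  set W : Matrix (Fin n) (Fin n) ℂ := Ψ * Ocᵀ * V with hW
  have hVrec : V = Oc * Φ * W := by
    rw [hW]
    calc V = (Oc * (Φ * Ψ) * Ocᵀ) * V := by rw [hΦΨ, mul_one, hOc1, one_mul]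
      _ = Oc * Φ * (Ψ * Ocᵀ * V) := by noncomm_ring
  have hWT : Wᵀ = Vᵀ * Oc * Ψ := by
    rw [hW, Matrix.transpose_mul, Matrix.transpose_mul, Matrix.transpose_transpose,
      Matrix.diagonal_transpose]
    noncomm_ring
  have hWWT : W * Wᵀ = 1 := by
    rw [hW, hWT]
    calc Ψ * Ocᵀ * V * (Vᵀ * Oc * Ψ) = Ψ * (Ocᵀ * (V * Vᵀ) * Oc) * Ψ := by noncomm_ring
      _ = Ψ * (Ocᵀ * (Oc * Matrix.diagonal z * Ocᵀ) * Oc) * Ψ := by rw [← hS, hSrec]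
      _ = Ψ * ((Ocᵀ * Oc) * Matrix.diagonal z * (Ocᵀ * Oc)) * Ψ := by noncomm_ring
      _ = Ψ * Matrix.diagonal z * Ψ := by rw [hOc2, one_mul, mul_one]
      _ = 1 := hΨzΨ
  have hstarOcT : star Ocᵀ = Oc := by
    ext i j
    simp [Matrix.star_apply, Matrix.transpose_apply, hOc, Matrix.map_apply]
  have hstarΨ : Ψ * star Ψ = 1 := by
    rw [hΨ]
    have : star (Matrix.diagonal fun j => Complex.exp (-(Complex.I * (φ j : ℂ)))) =
        Matrix.diagonal fun j => Complex.exp (Complex.I * (φ j : ℂ)) := by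
      ext i j
      rcases eq_or_ne i j with rfl | hij
      · simp only [Matrix.star_apply, Matrix.diagonal_apply_eq, Complex.star_def]
        rw [← Complex.exp_conj]
        congr 1
        simp [Complex.ext_iff]
      · simp [Matrix.star_apply, Matrix.diagonal_apply_ne, hij, Ne.symm hij]
    rw [this, Matrix.diagonal_mul_diagonal]
    convert Matrix.diagonal_one
    rw [← Complex.exp_add]
    simp
  have hWstar : W * star W = 1 := by
    rw [hW, StarMul.star_mul, StarMul.star_mul]
    calc Ψ * Ocᵀ * V * (star V * (star Ocᵀ * star Ψ))
        = Ψ * Ocᵀ * (V * star V) * star Ocᵀ * star Ψ := by noncomm_ring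
      _ = Ψ * (Ocᵀ * star Ocᵀ) * star Ψ := by rw [hV2]; noncomm_ring
      _ = Ψ * star Ψ := by rw [hstarOcT, hOc2, mul_one]
      _ = 1 := hstarΨ
  -- W has real entries
  have hWreal : ∀ i j, (starRingEnd ℂ) (W i j) = W i j := by
    have h1 : star W * W = 1 := mul_eq_one_comm.mp hWstar
    have h2 : star W = Wᵀ := by
      calc star W = star W * (W * Wᵀ) := by rw [hWWT, mul_one]
        _ = (star W * W) * Wᵀ := (mul_assoc _ _ _).symm
        _ = Wᵀ := by rw [h1, one_mul]
    intro i j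
    have := congrFun (congrFun h2 j) i
    simpa [Matrix.star_apply, Matrix.transpose_apply] using this
  set O₂ : Matrix (Fin n) (Fin n) ℝ := W.map Complex.re with hO₂
  have hWmap : W = O₂.map (fun a => (a : ℂ)) := by
    ext i j
    simp only [hO₂, Matrix.map_apply]
    exact (Complex.conj_eq_iff_re.mp (hWreal i j)).symm
  have hO₂mem : O₂ ∈ Matrix.orthogonalGroup (Fin n) ℝ := by
    rw [Matrix.mem_orthogonalGroup_iff]
    have hst : star O₂ = O₂ᵀ := by
      ext i j
      simp [Matrix.star_apply, Matrix.conjTranspose_apply, Matrix.transpose_apply]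
    apply mapC_inj (n := n)
    rw [mapC_mul, mapC_one, ← hWmap]
    have : O₂ᵀ.map (fun a => (a : ℂ)) = Wᵀ := by
      rw [hWmap]
      ext i j
      simp [Matrix.transpose_apply, Matrix.map_apply]
    rw [this, hWWT]
  exact ⟨O, O₂, φ, hO, hO₂mem, by rw [← hOc, ← hΦ, ← hWmap]; exact hVrec⟩

/-- Every unitary matrix `V` decomposes as `V = O₁ Φ O₂` with `O₁, O₂`
real orthogonal and `Φ` diagonal with unit-modulus entries `e^{iφ_j}`. -/
theorem unitary_decomposition {n : ℕ} (V : Matrix (Fin n) (Fin n) ℂ)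
    (hV : V ∈ Matrix.unitaryGroup (Fin n) ℂ) :
    ∃ (O₁ O₂ : Matrix (Fin n) (Fin n) ℝ) (φ : Fin n → ℝ),
      O₁ ∈ Matrix.orthogonalGroup (Fin n) ℝ ∧
      O₂ ∈ Matrix.orthogonalGroup (Fin n) ℝ ∧
      V = O₁.map (fun a => (a : ℂ)) *
          Matrix.diagonal (fun j => Complex.exp (Complex.I * φ j)) *
          O₂.map (fun a => (a : ℂ)) := by
  exact unitary_decomposition' V hV
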